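/- Every locally polynomial function f : ℤ_p → E (a function which on each coset of some p^N ℤ_p agrees with a polynomial) is of class C^r for every r ∈ ℝ_{≥0}. -/

import Mathlib

open Filter

variable {p : ℕ} [Fact p.Prime]

/-- The Mahler coefficients `a_n(f) = ∑_{i=0}^n (-1)^i C(n,i) f(n-i)`. -/
noncomputable def mahlerCoeff {E : Type*} [NontriviallyNormedField E]
    (f : ℤ_[p] → E) (n : ℕ) : E :=
  ∑ i ∈ Finset.range (n + 1), (-1 : E) ^ i * (n.choose i : E) * f ((n - i : ℕ) : ℤ_[p])

/-- `f : ℤ_p → E` is of class `C^r` if `n^r |a_n(f)| → 0`. -/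
def IsCr {E : Type*} [NontriviallyNormedField E] (r : ℝ) (f : ℤ_[p] → E) : Prop :=
  Tendsto (fun n : ℕ => (n : ℝ) ^ r * ‖mahlerCoeff f n‖) atTop (nhds (0 : ℝ))

/-- `f : ℤ_p → E` is locally polynomial if there is `N` such that on each coset of
`p^N ℤ_p` it agrees with a polynomial. -/
def IsLocPoly {E : Type*} [NontriviallyNormedField E] [NormedAlgebra ℚ_[p] E]
    (f : ℤ_[p] → E) : Prop :=
  ∃ N : ℕ, ∀ a : ℤ_[p], ∃ P : Polynomial E, ∀ z : ℤ_[p],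
    ‖z - a‖ ≤ (p : ℝ) ^ (-(N : ℤ)) → f z = P.eval (algebraMap ℚ_[p] E (z : ℚ_[p]))

/-! ## Auxiliary material -/

open Finset IsUltrametricDist
open scoped fwdDiff

namespace LocPolyAux

variable {E : Type*} [NontriviallyNormedField E] [NormedAlgebra ℚ_[p] E]

/-- The Mahler coefficients are iterated forward differences. -/
lemma mahlerCoeff_eq (f : ℤ_[p] → E) (n : ℕ) : mahlerCoeff f n = (Δ_[1])^[n] f 0 := by
  rw [fwdDiff_iter_eq_sum_shift, mahlerCoeff, ← Finset.sum_range_reflect]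
  refine Finset.sum_congr rfl fun i hi => ?_
  rw [Finset.mem_range] at hi
  have h1 : n + 1 - 1 - i = n - i := by omega
  have h2 : n - (n - i) = i := by omega
  have h3 : n.choose (n - i) = n.choose i := Nat.choose_symm (by omega)
  rw [h1, h2, h3]
  have h4 : (0 : ℤ_[p]) + i • (1 : ℤ_[p]) = (i : ℤ_[p]) := by
    simp [nsmul_eq_mul]
  rw [h4, zsmul_eq_mul]
  push_cast
  ring

/-- Bojanić's step 1 (copied from Mathlib's private lemma `bojanic_mahler_step1`). -/
lemma step1 {M G : Type*} [AddCommMonoidWithOne M] [AddCommGroup G] (f : M → G)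
    (n : ℕ) {R : ℕ} (hR : 1 ≤ R) :
    (Δ_[1])^[n + R] f 0 = -∑ j ∈ range (R - 1), R.choose (j + 1) • (Δ_[1])^[n + (j + 1)] f 0 +
      ∑ k ∈ range (n + 1), ((-1 : ℤ) ^ (n - k) * n.choose k) • (f (k + R) - f k) := by
  have aux : (Δ_[1])^[n + R] f 0 = R.choose (R - 1 + 1) • (Δ_[1])^[n + R] f 0 := by
    rw [Nat.sub_add_cancel hR, Nat.choose_self, one_smul]
  rw [neg_add_eq_sub, eq_sub_iff_add_eq, add_comm, aux, (by omega : n + R = (n + ((R - 1) + 1))),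
    ← sum_range_succ, Nat.sub_add_cancel hR,
    ← sub_eq_iff_eq_add.mpr (sum_range_succ' (fun x ↦ R.choose x • (Δ_[1])^[n + x] f 0) R), add_zero,
    Nat.choose_zero_right, one_smul]
  have : ∑ k ∈ Finset.range (R + 1), R.choose k • (Δ_[1])^[n + k] f 0 = (Δ_[1])^[n] f R := by
    simpa only [← Function.iterate_add_apply, add_comm, nsmul_one, add_zero] using
      (shift_eq_sum_fwdDiff_iter 1 ((Δ_[1])^[n] f) R 0).symm
  simp only [this, fwdDiff_iter_eq_sum_shift (1 : M) f n, mul_comm, nsmul_one, mul_smul, add_comm,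
    add_zero, smul_sub, sum_sub_distrib]

/-- The recurrence, with the error term expressed as a forward difference of
`z ↦ f (z + p ^ N) - f z`. -/
lemma recur (f : ℤ_[p] → E) (N n : ℕ) :
    (Δ_[1])^[n + p ^ N] f 0
      = -∑ j ∈ range (p ^ N - 1), ((p ^ N).choose (j + 1)) • (Δ_[1])^[n + (j + 1)] f 0 +
        (Δ_[1])^[n] (fun z => f (z + (p : ℤ_[p]) ^ N) - f z) 0 := by
  rw [step1 f n (Nat.one_le_pow _ _ (Fact.out : p.Prime).pos)]
  congr 1
  rw [fwdDiff_iter_eq_sum_shift]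
  refine Finset.sum_congr rfl fun k _ => ?_
  congr 2 <;> push_cast <;> simp [nsmul_eq_mul]

/-- Locally polynomial of level `N` with degrees bounded by `e`. -/
def LP (N e : ℕ) (h : ℤ_[p] → E) : Prop :=
  ∀ a : ℤ_[p], ∃ P : Polynomial E, P.natDegree ≤ e ∧ ∀ z : ℤ_[p],
    ‖z - a‖ ≤ (p : ℝ) ^ (-(N : ℤ)) → h z = P.eval (algebraMap ℚ_[p] E (z : ℚ_[p]))

lemma exists_LP {f : ℤ_[p] → E} (hf : IsLocPoly f) : ∃ N e, LP N e f := by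
  obtain ⟨N, hN⟩ := hf
  choose P hP using hN
  refine ⟨N, (Finset.range (p ^ N)).sup fun k => (P ((k : ℕ) : ℤ_[p])).natDegree, fun a => ?_⟩
  refine ⟨P ((a.appr N : ℕ) : ℤ_[p]),
    Finset.le_sup (f := fun k : ℕ => (P ((k : ℕ) : ℤ_[p])).natDegree)
      (Finset.mem_range.mpr (a.appr_lt N)), fun z hz => ?_⟩
  apply hP
  have h1 : ‖a - ((a.appr N : ℕ) : ℤ_[p])‖ ≤ (p : ℝ) ^ (-(N : ℤ)) := by
    rw [PadicInt.norm_le_pow_iff_mem_span_pow]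
    exact PadicInt.appr_spec N a
  have h2 : z - ((a.appr N : ℕ) : ℤ_[p]) = (z - a) + (a - ((a.appr N : ℕ) : ℤ_[p])) := by ring
  rw [h2]
  exact (PadicInt.nonarchimedean _ _).trans (max_le hz h1)

lemma taylor_sub_coeff {F : Type*} [CommRing F] (P : Polynomial F) (c : F) {m : ℕ}
    (hm : P.natDegree ≤ m) : ((Polynomial.taylor c P) - P).coeff m = 0 := by
  have h0 : (Polynomial.hasseDeriv m P).natDegree ≤ 0 :=
    (Polynomial.natDegree_hasseDeriv_le P m).trans (by omega)
  rw [Polynomial.coeff_sub, Polynomial.taylor_coeff,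
    Polynomial.eq_C_of_natDegree_le_zero h0, Polynomial.eval_C, Polynomial.hasseDeriv_coeff]
  simp

lemma LP_step {N e : ℕ} {h : ℤ_[p] → E} (hh : LP N (e + 1) h) :
    LP N e (fun z => h (z + (p : ℤ_[p]) ^ N) - h z) := by
  intro a
  obtain ⟨P, hdeg, hP⟩ := hh a
  set c : E := algebraMap ℚ_[p] E ((p : ℚ_[p]) ^ N) with hc
  refine ⟨Polynomial.taylor c P - P, ?_, fun z hz => ?_⟩
  · rw [Polynomial.natDegree_le_iff_coeff_eq_zero]
    intro m hm
    exact taylor_sub_coeff P c (hdeg.trans hm)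
  · have hz' : ‖(z + (p : ℤ_[p]) ^ N) - a‖ ≤ (p : ℝ) ^ (-(N : ℤ)) := by
      have h2 : (z + (p : ℤ_[p]) ^ N) - a = (z - a) + (p : ℤ_[p]) ^ N := by ring
      rw [h2]
      refine (PadicInt.nonarchimedean _ _).trans (max_le hz ?_)
      rw [PadicInt.norm_p_pow]
    have hcast : (algebraMap ℚ_[p] E (((z + (p : ℤ_[p]) ^ N : ℤ_[p]) : ℚ_[p])))
        = algebraMap ℚ_[p] E ((z : ℤ_[p]) : ℚ_[p]) + c := by
      rw [show ((z + (p : ℤ_[p]) ^ N : ℤ_[p]) : ℚ_[p]) = ((z : ℤ_[p]) : ℚ_[p]) + (p : ℚ_[p]) ^ N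
        by push_cast; ring, map_add, hc]
    simp only
    rw [hP _ hz', hP _ hz, hcast, Polynomial.eval_sub, Polynomial.taylor_eval]

lemma LP_zero {N : ℕ} {h : ℤ_[p] → E} (hh : LP N 0 h) (z : ℤ_[p]) :
    h (z + (p : ℤ_[p]) ^ N) - h z = 0 := by
  obtain ⟨P, hdeg, hP⟩ := hh z
  have h1 := hP z (by simp)
  have h2 := hP (z + (p : ℤ_[p]) ^ N) (by
    rw [show (z + (p : ℤ_[p]) ^ N) - z = (p : ℤ_[p]) ^ N by ring, PadicInt.norm_p_pow])
  rw [h1, h2, Polynomial.eq_C_of_natDegree_le_zero hdeg]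
  simp

lemma LP_bound {N e : ℕ} {h : ℤ_[p] → E} (hh : LP N e h) :
    ∃ D : ℝ, 0 ≤ D ∧ ∀ n : ℕ, ‖(Δ_[1])^[n] h 0‖ ≤ D := by
  haveI : IsUltrametricDist E := IsUltrametricDist.of_normedAlgebra ℚ_[p]
  have hcont : Continuous h := by
    rw [continuous_iff_continuousAt]
    intro z
    obtain ⟨P, -, hP⟩ := hh z
    have hc1 : Continuous fun q : ℚ_[p] => algebraMap ℚ_[p] E q := by
      simp only [Algebra.algebraMap_eq_smul_one]
      exact continuous_id.smul continuous_const
    have hc : ContinuousAt (fun w : ℤ_[p] => P.eval (algebraMap ℚ_[p] E (w : ℚ_[p]))) z := by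
      exact ((Polynomial.continuous P).comp (hc1.comp continuous_induced_dom)).continuousAt
    refine hc.congr ?_
    have hmem : Metric.closedBall z ((p : ℝ) ^ (-(N : ℤ))) ∈ nhds z :=
      Metric.closedBall_mem_nhds _
        (zpow_pos (by exact_mod_cast (Fact.out : p.Prime).pos) _)
    filter_upwards [hmem] with w hw
    exact (hP w (by rwa [Metric.mem_closedBall, dist_eq_norm] at hw)).symm
  refine ⟨‖(⟨h, hcont⟩ : C(ℤ_[p], E))‖, norm_nonneg _, fun n => ?_⟩
  exact IsUltrametricDist.norm_fwdDiff_iter_apply_le (1 : ℤ_[p]) ⟨h, hcont⟩ 0 n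

lemma choose_norm_le {N j : ℕ} (hj : j ∈ Finset.range (p ^ N - 1)) :
    ‖(((p ^ N).choose (j + 1) : ℚ_[p]))‖ ≤ (p : ℝ)⁻¹ := by
  rw [Finset.mem_range] at hj
  obtain ⟨c, hc⟩ : p ∣ (p ^ N).choose (j + 1) :=
    (Fact.out : p.Prime).dvd_choose_pow (by omega) (by omega)
  rw [hc]
  push_cast
  rw [norm_mul, Padic.norm_p]
  have hcle : ‖((c : ℤ) : ℚ_[p])‖ ≤ 1 := Padic.norm_int_le_one c
  calc (p : ℝ)⁻¹ * ‖((c : ℕ) : ℚ_[p])‖ ≤ (p : ℝ)⁻¹ * 1 := by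
        refine mul_le_mul_of_nonneg_left ?_ (by positivity)
        simpa using hcle
    _ = (p : ℝ)⁻¹ := mul_one _

lemma key_step {N : ℕ} (h : ℤ_[p] → E) (D Cg : ℝ) (hCg0 : 0 ≤ Cg)
    (hD : ∀ n, ‖(Δ_[1])^[n] h 0‖ ≤ D)
    (hg : ∀ m n : ℕ,
      ‖(Δ_[1])^[n + m * p ^ N] (fun z => h (z + (p : ℤ_[p]) ^ N) - h z) 0‖ ≤ Cg * ((p : ℝ)⁻¹) ^ m) :
    ∀ m n : ℕ, ‖(Δ_[1])^[n + m * p ^ N] h 0‖ ≤ max D ((p : ℝ) * Cg) * ((p : ℝ)⁻¹) ^ m := by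
  haveI : IsUltrametricDist E := IsUltrametricDist.of_normedAlgebra ℚ_[p]
  have hD0 : 0 ≤ D := (norm_nonneg _).trans (hD 0)
  have hppos : (0 : ℝ) < p := by exact_mod_cast (Fact.out : p.Prime).pos
  intro m
  induction m with
  | zero => intro n; simpa using (hD _).trans (le_max_left _ _)
  | succ m IH =>
    intro n
    have hM0 : 0 ≤ max D ((p : ℝ) * Cg) * ((p : ℝ)⁻¹) ^ (m + 1) := by positivity
    rw [show n + (m + 1) * p ^ N = (n + m * p ^ N) + p ^ N by ring, recur h N _]
    refine (norm_add_le_max _ _).trans (max_le ?_ ?_)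
    · rw [norm_neg]
      refine norm_sum_le_of_forall_le_of_nonneg hM0 fun j hj => ?_
      rw [← Nat.cast_smul_eq_nsmul ℚ_[p]]
      refine (norm_smul_le _ _).trans ?_
      rw [show (n + m * p ^ N) + (j + 1) = (n + (j + 1)) + m * p ^ N by ring]
      calc ‖(((p ^ N).choose (j + 1) : ℚ_[p]))‖ * ‖(Δ_[1])^[(n + (j + 1)) + m * p ^ N] h 0‖
          ≤ (p : ℝ)⁻¹ * (max D ((p : ℝ) * Cg) * ((p : ℝ)⁻¹) ^ m) :=
            mul_le_mul (choose_norm_le hj) (IH _) (norm_nonneg _) (by positivity)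
        _ = max D ((p : ℝ) * Cg) * ((p : ℝ)⁻¹) ^ (m + 1) := by ring
    · calc ‖(Δ_[1])^[n + m * p ^ N] (fun z => h (z + (p : ℤ_[p]) ^ N) - h z) 0‖
          ≤ Cg * ((p : ℝ)⁻¹) ^ m := hg m n
        _ = ((p : ℝ) * Cg) * ((p : ℝ)⁻¹) ^ (m + 1) := by
            rw [pow_succ, mul_comm (p : ℝ) Cg, mul_assoc Cg, mul_comm (p : ℝ), mul_assoc,
              inv_mul_cancel₀ hppos.ne', mul_one]
        _ ≤ max D ((p : ℝ) * Cg) * ((p : ℝ)⁻¹) ^ (m + 1) := by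
            have := le_max_right D ((p : ℝ) * Cg)
            gcongr

lemma key {N : ℕ} : ∀ (e : ℕ) (h : ℤ_[p] → E), LP N e h →
    ∃ C : ℝ, 0 ≤ C ∧ ∀ m n : ℕ, ‖(Δ_[1])^[n + m * p ^ N] h 0‖ ≤ C * ((p : ℝ)⁻¹) ^ m := by
  intro e
  induction e with
  | zero =>
    intro h hh
    obtain ⟨D, hD0, hD⟩ := LP_bound hh
    have hg : ∀ m n : ℕ,
        ‖(Δ_[1])^[n + m * p ^ N] (fun z => h (z + (p : ℤ_[p]) ^ N) - h z) 0‖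
          ≤ 0 * ((p : ℝ)⁻¹) ^ m := by
      intro m n
      have h0 : (fun z => h (z + (p : ℤ_[p]) ^ N) - h z) = fun _ => (0 : E) :=
        funext (LP_zero hh)
      rw [h0]
      simp [fwdDiff_iter_eq_sum_shift]
    exact ⟨max D ((p : ℝ) * 0), hD0.trans (le_max_left _ _),
      key_step h D 0 le_rfl hD hg⟩
  | succ e IH =>
    intro h hh
    obtain ⟨Cg, hCg0, hCg⟩ := IH _ (LP_step hh)
    obtain ⟨D, hD0, hD⟩ := LP_bound hh
    exact ⟨max D ((p : ℝ) * Cg), hD0.trans (le_max_left _ _),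
      key_step h D Cg hCg0 hD hCg⟩

/-- Exponential decay of the Mahler coefficients of a locally polynomial function. -/
lemma decay {f : ℤ_[p] → E} (hf : IsLocPoly f) :
    ∃ (K : ℕ) (C : ℝ), 0 < K ∧ 0 ≤ C ∧
      ∀ n : ℕ, ‖mahlerCoeff f n‖ ≤ C * ((p : ℝ)⁻¹) ^ (n / K) := by
  obtain ⟨N, e, hLP⟩ := exists_LP hf
  obtain ⟨C, hC0, hC⟩ := key e f hLP
  refine ⟨p ^ N, C, pow_pos (Fact.out : p.Prime).pos N, hC0, fun n => ?_⟩
  rw [mahlerCoeff_eq]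
  have h1 := hC (n / p ^ N) (n % p ^ N)
  rwa [Nat.mod_add_div' n (p ^ N)] at h1

lemma tendsto_aux (K : ℕ) (hK : 0 < K) (C : ℝ) (hC : 0 ≤ C) (r : ℝ) (hr : 0 ≤ r) :
    Tendsto (fun n : ℕ => (n : ℝ) ^ r * (C * ((p : ℝ)⁻¹) ^ (n / K))) atTop (nhds 0) := by
  have hp1 : (1 : ℝ) < p := by exact_mod_cast (Fact.out : p.Prime).one_lt
  set q : ℝ := (p : ℝ)⁻¹ with hq
  have hq0 : 0 < q := by positivity
  have hq1 : q < 1 := by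
    rw [hq, inv_lt_one_iff₀]; right; exact hp1
  set t : ℝ := q ^ ((K : ℝ)⁻¹) with ht
  have ht0 : 0 < t := Real.rpow_pos_of_pos hq0 _
  have ht1 : t < 1 := Real.rpow_lt_one hq0.le hq1 (by positivity)
  have htK : t ^ K = q := by
    rw [ht, ← Real.rpow_natCast (q ^ ((K : ℝ)⁻¹)) K, ← Real.rpow_mul hq0.le,
      inv_mul_cancel₀ (by exact_mod_cast hK.ne'), Real.rpow_one]
  set k : ℕ := ⌈r⌉₊ with hk
  have htend : Tendsto (fun n : ℕ => (C / q) * ((n : ℝ) ^ k * t ^ n)) atTop (nhds 0) := by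
    have := tendsto_pow_const_mul_const_pow_of_abs_lt_one k (r := t) (by rw [abs_of_pos ht0]; exact ht1)
    simpa using this.const_mul (C / q)
  apply squeeze_zero' (Eventually.of_forall fun n => by positivity)
  · filter_upwards [eventually_ge_atTop (max K 1)] with n hn
    have hn1 : 1 ≤ n := le_trans (le_max_right _ _) hn
    have hnK : K ≤ n := le_trans (le_max_left _ _) hn
    have hb1 : (n : ℝ) ^ r ≤ (n : ℝ) ^ (k : ℕ) := by
      rw [← Real.rpow_natCast (n : ℝ) k]
      exact Real.rpow_le_rpow_of_exponent_le (by exact_mod_cast hn1) (Nat.le_ceil r)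
    have hb2 : q ^ (n / K) ≤ t ^ (n - K) := by
      rw [← htK, ← pow_mul]
      refine pow_le_pow_of_le_one ht0.le ht1.le ?_
      have h1 := Nat.div_add_mod n K
      have h2 := Nat.mod_lt n hK
      omega
    have hb3 : t ^ (n - K) = (1 / q) * t ^ n := by
      rw [pow_sub₀ _ ht0.ne' hnK, htK]
      field_simp
    calc (n : ℝ) ^ r * (C * q ^ (n / K))
        ≤ (n : ℝ) ^ k * (C * ((1 / q) * t ^ n)) := by
          rw [← hb3]
          exact mul_le_mul hb1 (by have := hb2; gcongr) (by positivity)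
            (by positivity)
      _ = (C / q) * ((n : ℝ) ^ k * t ^ n) := by ring
  · exact htend

end LocPolyAux

/-- Every locally polynomial function `ℤ_p → E` is of class `C^r` for all `r ≥ 0`. -/
theorem isCr_of_isLocPoly {E : Type*} [NontriviallyNormedField E] [NormedAlgebra ℚ_[p] E]
    [FiniteDimensional ℚ_[p] E] (f : ℤ_[p] → E) (hf : IsLocPoly f) :
    ∀ r : ℝ, 0 ≤ r → IsCr r f := by
  intro r hr
  obtain ⟨K, C, hK, hC0, hC⟩ := LocPolyAux.decay hf
  unfold IsCr
  refine squeeze_zero' (Eventually.of_forall fun n => by positivity)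
    (Eventually.of_forall fun n => ?_) (LocPolyAux.tendsto_aux (p := p) K hK C hC0 r hr)
  exact mul_le_mul_of_nonneg_left (hC n) (Real.rpow_nonneg (Nat.cast_nonneg n) r)
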